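/- arXiv:1408.4745 — 2 statements merged into one kernel-verified Lean document; each statement's English description precedes it below -/
import Mathlib

section
/- If A₁ blocks X → M in G and X blocks A₂ → M in G, then the set difference A₁ \ A₂ blocks X → M in G. -/
/-- A directed walk in the digraph with edge relation `E`: a nonempty list of
vertices in which consecutive vertices are joined by an edge. Blocking is
equivalent for walks and paths, so we use walks.  `Blocks E R M X` says that
`X ∩ R = ∅` and every directed walk from a vertex of `R` to a vertex of `M`
contains a vertex of `X`. -/
def Blocks {V : Type*} (E : V → V → Prop) (R M X : Set V) : Prop :=
  X ∩ R = ∅ ∧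
    ∀ (p : List V) (h : p ≠ []), p.Chain' E →
      p.head h ∈ R → p.getLast h ∈ M → ∃ v ∈ p, v ∈ X

theorem getLast_eq_of_eq {V : Type*} {l l' : List V} (h : l = l') (h1 : l ≠ [])
    (h2 : l' ≠ []) : l.getLast h1 = l'.getLast h2 := by subst h; rfl

/-- If `A₁` blocks `X → M` and `X` blocks `A₂ → M`, then `A₁ \\ A₂` blocks
`X → M`. -/
theorem blocks_diff {V : Type*} [Fintype V] (E : V → V → Prop)
    (X M A₁ A₂ : Set V) (hA₁ : Blocks E X M A₁) (hX : Blocks E A₂ M X) :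
    Blocks E X M (A₁ \ A₂) := by
  obtain ⟨hA₁X, hA₁w⟩ := hA₁
  obtain ⟨hXA₂, hXw⟩ := hX
  constructor
  · ext v
    simp only [Set.mem_inter_iff, Set.mem_diff, Set.mem_empty_iff_false, iff_false]
    rintro ⟨⟨hv1, _⟩, hv2⟩
    have : v ∈ A₁ ∩ X := ⟨hv1, hv2⟩
    rw [hA₁X] at this
    exact this
  · suffices H : ∀ n (p : List V) (h : p ≠ []), p.length ≤ n → p.Chain' E →
        p.head h ∈ X → p.getLast h ∈ M → ∃ v ∈ p, v ∈ A₁ \ A₂ by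
      intro p h hc hh hl
      exact H p.length p h le_rfl hc hh hl
    intro n
    induction n with
    | zero =>
      intro p h hlen
      interval_cases hp : p.length
      · simp [List.length_eq_zero_iff] at hp
        exact absurd hp h
    | succ n ih =>
      intro p h hlen hc hh hl
      obtain ⟨a, haP, haA₁⟩ := hA₁w p h hc hh hl
      by_cases haA₂ : a ∈ A₂
      · obtain ⟨l₁, l₂, rfl⟩ := List.append_of_mem haP
        have hsuf : (a :: l₂) <:+ l₁ ++ a :: l₂ := ⟨l₁, rfl⟩
        have hq : (a :: l₂).Chain' E := hc.suffix hsuf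
        have hne : (a :: l₂) ≠ [] := by simp
        have hlast : (a :: l₂).getLast hne = (l₁ ++ a :: l₂).getLast h := by
          rw [List.getLast_append_of_ne_nil]
        obtain ⟨x, hxq, hxX⟩ := hXw (a :: l₂) hne hq haA₂ (hlast ▸ hl)
        have hxa : x ≠ a := by
          rintro rfl
          have : x ∈ X ∩ A₂ := ⟨hxX, haA₂⟩
          rw [hXA₂] at this
          exact this
        have hxl₂ : x ∈ l₂ := by
          rcases List.mem_cons.mp hxq with rfl | hx
          · exact absurd rfl hxa
          · exact hx
        obtain ⟨l₃, l₄, rfl⟩ := List.append_of_mem hxl₂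
        have hsuf2 : (x :: l₄) <:+ l₁ ++ a :: (l₃ ++ x :: l₄) :=
          ⟨l₁ ++ a :: l₃, by simp⟩
        have hne2 : (x :: l₄) ≠ [] := by simp
        have heq : l₁ ++ a :: (l₃ ++ x :: l₄) = (l₁ ++ a :: l₃) ++ x :: l₄ := by simp
        have hlast2 : (x :: l₄).getLast hne2 = (l₁ ++ a :: (l₃ ++ x :: l₄)).getLast h := by
          rw [getLast_eq_of_eq heq h (by simp), List.getLast_append_of_ne_nil]
        have hlen2 : (x :: l₄).length ≤ n := by
          simp only [List.length_append, List.length_cons] at hlen ⊢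
          omega
        obtain ⟨v, hvp, hvA⟩ := ih (x :: l₄) hne2 hlen2 (hc.suffix hsuf2) (by simp [hxX])
          (hlast2 ▸ hl)
        exact ⟨v, hsuf2.subset hvp, hvA⟩
      · exact ⟨a, haP, haA₁, haA₂⟩
end

section
/- Let R, X ⊆ V with R ∩ X = ∅. If X₀ ⊆ X and X₁ ⊆ X are both inclusion-minimal among the subsets of X that block R → X in G (i.e., each blocks R → X and no proper subset of it blocks R → X), then X₀ = X₁. In other words, the front front_G(R, X) — the inclusion-minimal subset of X blocking R → X — is unique. -/
private lemma first_hit {V : Type*} (E : V → V → Prop) (X : Set V) :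
    ∀ (p : List V) (hp : p ≠ []), p.Chain' E → (∃ v ∈ p, v ∈ X) →
      ∃ (q : List V) (hq : q ≠ []), q <+: p ∧ q.Chain' E ∧
        q.head hq = p.head hp ∧ q.getLast hq ∈ X ∧ ∀ v ∈ q.dropLast, v ∉ X := by
  intro p
  induction p with
  | nil => intro hp; exact absurd rfl hp
  | cons a l ih =>
    intro _ hc hex
    by_cases ha : a ∈ X
    · exact ⟨[a], by simp, ⟨l, rfl⟩, List.isChain_singleton a, rfl, ha, by simp⟩
    · have hex' : ∃ v ∈ l, v ∈ X := by
        obtain ⟨v, hv, hvX⟩ := hex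
        rcases List.mem_cons.1 hv with rfl | hv
        · exact absurd hvX ha
        · exact ⟨v, hv, hvX⟩
      have hl : l ≠ [] := by rintro rfl; simp at hex'
      obtain ⟨q, hq, ⟨t, ht⟩, hqc, hhead, hlast, hdrop⟩ := ih hl hc.tail hex'
      refine ⟨a :: q, by simp, ⟨t, by simp [ht]⟩, ?_, by simp, ?_, ?_⟩
      · rw [show List.Chain' E (a :: q) ↔ List.IsChain E (a :: q) from Iff.rfl, List.isChain_cons]
        refine ⟨?_, hqc⟩
        intro b hb
        have : l.head? = some b := by
          rw [← ht]; 
          rcases q with _ | ⟨c, q'⟩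
          · exact absurd rfl hq
          · simpa using hb
        have := (List.isChain_cons.1 hc).1 b this
        exact this
      · rw [List.getLast_cons hq]; exact hlast
      · intro v hv
        rw [List.dropLast_cons_of_ne_nil hq] at hv
        rcases List.mem_cons.1 hv with rfl | hv
        · exact ha
        · exact hdrop v hv

/-- Uniqueness of the front: two inclusion-minimal subsets of `X` blocking
`R → X` coincide. -/
theorem front_unique {V : Type*} [Fintype V] (E : V → V → Prop)
    (R X X₀ X₁ : Set V) (hRX : R ∩ X = ∅)
    (h₀ : X₀ ⊆ X) (hb₀ : Blocks E R X X₀) (hmin₀ : ∀ Y ⊂ X₀, ¬ Blocks E R X Y)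
    (h₁ : X₁ ⊆ X) (hb₁ : Blocks E R X X₁) (hmin₁ : ∀ Y ⊂ X₁, ¬ Blocks E R X Y) :
    X₀ = X₁ := by
  set F : Set V := {x | x ∈ X ∧ ∃ (q : List V) (hq : q ≠ []), q.Chain' E ∧
      q.head hq ∈ R ∧ q.getLast hq = x ∧ ∀ v ∈ q.dropLast, v ∉ X} with hF
  -- F blocks R → X
  have hFb : Blocks E R X F := by
    constructor
    · ext x; simp only [Set.mem_inter_iff, Set.mem_empty_iff_false, iff_false, not_and]
      intro hx hxR
      exact absurd (Set.ext_iff.1 hRX x |>.1 ⟨hxR, hx.1⟩) (by simp)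
    · intro p h hc hhead hlastX
      obtain ⟨q, hq, hpre, hqc, hqhead, hqlast, hqdrop⟩ :=
        first_hit E X p h hc ⟨_, List.getLast_mem h, hlastX⟩
      refine ⟨q.getLast hq, hpre.subset (List.getLast_mem hq), ?_⟩
      exact ⟨hqlast, q, hq, hqc, hqhead ▸ hhead, rfl, hqdrop⟩
  -- F ⊆ any blocking subset Y of X
  have hFsub : ∀ Y ⊆ X, Blocks E R X Y → F ⊆ Y := by
    intro Y hYX hYb x hx
    obtain ⟨hxX, q, hq, hqc, hqhead, hqlast, hqdrop⟩ := hx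
    obtain ⟨v, hv, hvY⟩ := hYb.2 q hq hqc hqhead (hqlast ▸ hxX)
    have hvX : v ∈ X := hYX hvY
    have : v = q.getLast hq := by
      have hspl : q = q.dropLast ++ [q.getLast hq] := (List.dropLast_append_getLast hq).symm
      rw [hspl, List.mem_append] at hv
      rcases hv with hv | hv
      · exact absurd hvX (hqdrop v hv)
      · simpa using hv
    rw [this, hqlast] at hvY
    exact hvY
  have key : ∀ (Y : Set V), Y ⊆ X → Blocks E R X Y → (∀ Z ⊂ Y, ¬ Blocks E R X Z) → Y = F := by
    intro Y hYX hYb hYmin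
    have h1 : F ⊆ Y := hFsub Y hYX hYb
    by_contra hne
    exact hYmin F (HasSubset.Subset.ssubset_of_ne h1 (Ne.symm hne)) hFb
  rw [key X₀ h₀ hb₀ hmin₀, key X₁ h₁ hb₁ hmin₁]
end
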